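/- Let $\mu = \sqrt{2+\sqrt 2}$ and let $h(x) = x^3 + x^4$. There exists a unique $\tilde\mu > 1$ with $h(\tilde\mu^{-1}) = \mu^{-2}$, and this $\tilde\mu$ satisfies $1.75 < \tilde\mu < 1.751$. -/

import Mathlib

/-- Fisher transformation at alternate vertices of the hexagonal lattice:
with `μ = √(2+√2)` and `h x = x^3 + x^4`, there is a unique `t > 1` with
`h (t⁻¹) = μ⁻²`, and it satisfies `1.75 < t < 1.751`. -/
theorem fisher_hexagonal_value :
    (∃! t : ℝ, 1 < t ∧
      (t⁻¹) ^ 3 + (t⁻¹) ^ 4 = ((Real.sqrt (2 + Real.sqrt 2))⁻¹) ^ 2) ∧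
    ∀ t : ℝ, 1 < t →
      (t⁻¹) ^ 3 + (t⁻¹) ^ 4 = ((Real.sqrt (2 + Real.sqrt 2))⁻¹) ^ 2 →
      1.75 < t ∧ t < 1.751 := by
  have hs2 : Real.sqrt 2 ^ 2 = 2 := Real.sq_sqrt (by norm_num)
  have hs0 : (0:ℝ) ≤ Real.sqrt 2 := Real.sqrt_nonneg 2
  set s := Real.sqrt 2 with hsdef
  have hslb : (1.4142:ℝ) < s := by nlinarith
  have hsub : s < 1.4143 := by nlinarith
  have ha : (0:ℝ) < 2 + s := by linarith
  have hc : ((Real.sqrt (2 + s))⁻¹) ^ 2 = (2 + s)⁻¹ := by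
    rw [inv_pow, Real.sq_sqrt ha.le]
  -- key bounds lemma
  have key : ∀ t : ℝ, 1 < t → (t⁻¹) ^ 3 + (t⁻¹) ^ 4 = (2 + s)⁻¹ →
      1.75 < t ∧ t < 1.751 := by
    intro t ht heq
    have ht0 : 0 < t := lt_trans one_pos ht
    have hx0 : 0 < t⁻¹ := inv_pos.mpr ht0
    set x := t⁻¹ with hx
    have heq' : (x ^ 3 + x ^ 4) * (2 + s) = 1 := by
      rw [heq]; field_simp
    constructor
    · by_contra h
      push_neg at h
      have hx47 : (4/7 : ℝ) ≤ x := by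
        have : (1.75 : ℝ)⁻¹ ≤ t⁻¹ := inv_anti₀ ht0 h
        rw [← hx] at this
        linarith [this, show ((1.75:ℝ))⁻¹ = 4/7 by norm_num]
      have h3 : (4/7 : ℝ) ^ 3 ≤ x ^ 3 := pow_le_pow_left₀ (by norm_num) hx47 3
      have h4 : (4/7 : ℝ) ^ 4 ≤ x ^ 4 := pow_le_pow_left₀ (by norm_num) hx47 4
      have hA : (704/2401 : ℝ) ≤ x ^ 3 + x ^ 4 := by nlinarith
      nlinarith [heq', hA, hslb, ha]
    · by_contra h
      push_neg at h
      have hxu : x ≤ (1000/1751 : ℝ) := by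
        have : t⁻¹ ≤ (1.751 : ℝ)⁻¹ := inv_anti₀ (by norm_num) h
        rw [← hx] at this
        linarith [this, show ((1.751:ℝ))⁻¹ = 1000/1751 by norm_num]
      have h3 : x ^ 3 ≤ (1000/1751 : ℝ) ^ 3 := pow_le_pow_left₀ hx0.le hxu 3
      have h4 : x ^ 4 ≤ (1000/1751 : ℝ) ^ 4 := pow_le_pow_left₀ hx0.le hxu 4
      have hA : x ^ 3 + x ^ 4 ≤ (1000/1751 : ℝ) ^ 3 + (1000/1751 : ℝ) ^ 4 := by
        linarith
      nlinarith [heq', hA, hsub, ha]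
  -- existence via the intermediate value theorem
  have hcont : ContinuousOn (fun x : ℝ => x ^ 3 + x ^ 4)
      (Set.Icc (1000/1751 : ℝ) (4/7 : ℝ)) := by fun_prop
  have hivt := intermediate_value_Icc (by norm_num : (1000/1751 : ℝ) ≤ 4/7) hcont
  have hcmem : (2 + s)⁻¹ ∈ Set.Icc ((1000/1751 : ℝ) ^ 3 + (1000/1751 : ℝ) ^ 4)
      ((4/7 : ℝ) ^ 3 + (4/7 : ℝ) ^ 4) := by
    constructor
    · rw [inv_eq_one_div, le_div_iff₀ ha]; nlinarith
    · rw [inv_eq_one_div, div_le_iff₀ ha]; nlinarith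
  obtain ⟨x, hxmem, hgx⟩ := hivt hcmem
  simp only at hgx
  have hx0 : (0:ℝ) < x := lt_of_lt_of_le (by norm_num) hxmem.1
  have hx1 : x < 1 := lt_of_le_of_lt hxmem.2 (by norm_num)
  have ht1 : 1 < x⁻¹ := (one_lt_inv₀ hx0).mpr hx1
  have hteq : ((x⁻¹)⁻¹) ^ 3 + ((x⁻¹)⁻¹) ^ 4 = (2 + s)⁻¹ := by
    rw [inv_inv]; exact hgx
  -- strict monotonicity gives injectivity
  have hmono : StrictMonoOn (fun x : ℝ => x ^ 3 + x ^ 4) (Set.Ici 0) := by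
    intro a ha' b hb' hab
    simp only
    have h3 := pow_lt_pow_left₀ hab ha' (n := 3) (by norm_num)
    have h4 := pow_lt_pow_left₀ hab ha' (n := 4) (by norm_num)
    linarith
  constructor
  · refine ⟨x⁻¹, ⟨ht1, by rw [hc]; exact hteq⟩, ?_⟩
    intro t' ⟨ht'1, ht'eq⟩
    rw [hc] at ht'eq
    have ht'0 : 0 < t' := lt_trans one_pos ht'1
    have hinj : t'⁻¹ = x := by
      refine hmono.injOn (Set.mem_Ici.mpr (inv_pos.mpr ht'0).le)
        (Set.mem_Ici.mpr hx0.le) ?_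
      show t'⁻¹ ^ 3 + t'⁻¹ ^ 4 = x ^ 3 + x ^ 4
      rw [ht'eq, hgx]
    rw [← hinj, inv_inv]
  · intro t ht heqt
    exact key t ht (by rw [hc] at heqt; exact heqt)
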